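/- Fix τ, σ ≥ 1 and n. An integer s with 1 ≤ s ≤ n is the number of distinct states s(T) of some simple tile T of a periodic solution with temporal period τ and spatial period σ over the alphabet ℤ_n if and only if there exists a divisor d of gcd(τ, σ) such that s = τσ/d. -/

import Mathlib

open Filter

/-- An `n`-state 2-neighbor cellular automaton rule. -/
abbrev CARule (n : ℕ) := Fin n → Fin n → Fin n

/-- One step of the CA evolution: `ξ_{t+1}(x) = f(ξ_t(x-1), ξ_t(x))`. -/
def caStep {n : ℕ} (f : CARule n) (ξ : ℤ → Fin n) : ℤ → Fin n :=
  fun x => f (ξ (x - 1)) (ξ x)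

/-- The trajectory of an initial configuration under the rule `f`. -/
def caTraj {n : ℕ} (f : CARule n) (ξ : ℤ → Fin n) : ℕ → ℤ → Fin n
  | 0 => ξ
  | t + 1 => caStep f (caTraj f ξ t)

/-- `ξ` is (the initial configuration of) a periodic solution of `f` with
minimal temporal period `τ` and minimal spatial period `σ`. -/
def IsPS {n : ℕ} (f : CARule n) (ξ : ℤ → Fin n) (τ σ : ℕ) : Prop :=
  0 < τ ∧ 0 < σ ∧
  (∀ x : ℤ, ξ (x + (σ : ℤ)) = ξ x) ∧
  (∀ σ' : ℕ, 0 < σ' → (∀ x : ℤ, ξ (x + (σ' : ℤ)) = ξ x) → σ ≤ σ') ∧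
  caTraj f ξ τ = ξ ∧
  (∀ τ' : ℕ, 0 < τ' → caTraj f ξ τ' = ξ → τ ≤ τ')

/-- `η` is a proper initial configuration for the periodic solution `ξ`:
it agrees with `ξ` at all sites `≤ y` for some `y`. -/
def IsProper {n : ℕ} (ξ η : ℤ → Fin n) : Prop :=
  ∃ y : ℤ, ∀ x ≤ y, η x = ξ x

/-- The periodic solution `ξ` of `f` is weakly robust: the expansion velocity is
positive, i.e. there is `v > 0` such that for every proper initial configuration
`η`, eventually (in `t`) the two trajectories agree at all sites `x ≤ v·t`
(equivalently, `inf_η liminf_t s_t(η)/t > 0`). -/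
def IsWeaklyRobust {n : ℕ} (f : CARule n) (ξ : ℤ → Fin n) : Prop :=
  ∃ v : ℝ, 0 < v ∧ ∀ η : ℤ → Fin n, IsProper ξ η →
    ∀ᶠ t : ℕ in atTop, ∀ x : ℤ, (x : ℝ) ≤ v * t → caTraj f η t x = caTraj f ξ t x

/-- The label (τ-periodic sequence) `A` right-extends to `B` under `f`: `A → B`. -/
def RightExtends {n : ℕ} (f : CARule n) (A B : ℕ → Fin n) : Prop :=
  ∀ i : ℕ, f (A i) (B i) = B (i + 1)

/-- The sequence `c_{j+1} = f(a_j, c_j)` started at `c₀`. -/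
def chaseSeq {n : ℕ} (f : CARule n) (A : ℕ → Fin n) (c₀ : Fin n) : ℕ → Fin n
  | 0 => c₀
  | j + 1 => f (A j) (chaseSeq f A c₀ j)

/-- The label `A` decides `B` under `f`: `A ⇒ B`. -/
def Decides {n : ℕ} (f : CARule n) (A B : ℕ → Fin n) : Prop :=
  RightExtends f A B ∧ ∀ c₀ : Fin n, ∃ j : ℕ, chaseSeq f A c₀ j = B j

/-- `T` is a (τ,σ)-periodic array (row index mod τ, column index mod σ). -/
def IsTilePeriodic {n : ℕ} (τ σ : ℕ) (T : ℕ → ℕ → Fin n) : Prop :=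
  (∀ i j, T (i + τ) j = T i j) ∧ (∀ i j, T i (j + σ) = T i j)

/-- The set of states appearing in the tile `T`. -/
def tileStates (n τ σ : ℕ) (T : ℕ → ℕ → Fin n) : Finset (Fin n) :=
  (Finset.range τ ×ˢ Finset.range σ).image fun p => T p.1 p.2

/-- The set of horizontally adjacent pairs appearing in the tile `T`. -/
def tilePairs (n τ σ : ℕ) (T : ℕ → ℕ → Fin n) : Finset (Fin n × Fin n) :=
  (Finset.range τ ×ˢ Finset.range σ).image fun p => (T p.1 p.2, T p.1 (p.2 + 1))

/-- `T` is a tile of a periodic solution: uniqueness of assignment, each row has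
minimal period `σ`, and the cyclic sequence of rows has minimal period `τ`. -/
def IsPSTile (n τ σ : ℕ) (T : ℕ → ℕ → Fin n) : Prop :=
  IsTilePeriodic τ σ T ∧
  (∀ i j k m, T i j = T k m → T i (j + 1) = T k (m + 1) →
      T (i + 1) (j + 1) = T (k + 1) (m + 1)) ∧
  (∀ i : ℕ, ∀ σ' : ℕ, 0 < σ' → (∀ j, T i (j + σ') = T i j) → σ ≤ σ') ∧
  (∀ τ' : ℕ, 0 < τ' → (∀ i j, T (i + τ') j = T i j) → τ ≤ τ')

/-- `T` is a tile of a periodic solution of the given rule `f`. -/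
def IsPSTileOf {n : ℕ} (f : CARule n) (τ σ : ℕ) (T : ℕ → ℕ → Fin n) : Prop :=
  IsTilePeriodic τ σ T ∧
  (∀ i j, f (T i j) (T i (j + 1)) = T (i + 1) (j + 1)) ∧
  (∀ i : ℕ, ∀ σ' : ℕ, 0 < σ' → (∀ j, T i (j + σ') = T i j) → σ ≤ σ') ∧
  (∀ τ' : ℕ, 0 < τ' → (∀ i j, T (i + τ') j = T i j) → τ ≤ τ')

/-- `T` is simple: the assignment number `p(T)` equals the number of states `s(T)`. -/
def IsSimpleTile (n τ σ : ℕ) (T : ℕ → ℕ → Fin n) : Prop :=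
  (tilePairs n τ σ T).card = (tileStates n τ σ T).card

/-- The rank of a tile: the largest `x` such that some `x` columns of `T`
together contain `x * τ` pairwise distinct states. -/
noncomputable def tileRank (n τ σ : ℕ) (T : ℕ → ℕ → Fin n) : ℕ :=
  sSup {x : ℕ | ∃ J : Finset ℕ, J ⊆ Finset.range σ ∧ J.card = x ∧
    ((J ×ˢ Finset.range τ).image fun p => T p.2 p.1).card = x * τ}

/-- The tile of the periodic solution `ξ` of `f`: `a_{i,j} = ξ_i(j)`. -/
def psTile {n : ℕ} (f : CARule n) (ξ : ℤ → Fin n) : ℕ → ℕ → Fin n :=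
  fun i j => caTraj f ξ i (j : ℤ)

/-- an integer `1 ≤ s ≤ n` is the number of distinct states of some
simple tile of a periodic solution with periods `τ, σ` over `ℤ_n` if and only if
`s = τσ/d` for some divisor `d` of `gcd(τ, σ)`. -/
/- ### helpers -/

lemma enc_div {σ : ℕ} (c o : ℕ) (h : o < σ) : (c * σ + o) / σ = c := by
  rw [mul_comm, Nat.mul_add_div (by omega), Nat.div_eq_of_lt h, add_zero]

lemma enc_mod {σ : ℕ} (c o : ℕ) (h : o < σ) : (c * σ + o) % σ = o := by
  rw [mul_comm, Nat.mul_add_mod, Nat.mod_eq_of_lt h]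

lemma enc_inj {σ : ℕ} {c₁ o₁ c₂ o₂ : ℕ} (h1 : o₁ < σ) (h2 : o₂ < σ)
    (h : c₁ * σ + o₁ = c₂ * σ + o₂) : c₁ = c₂ ∧ o₁ = o₂ := by
  have e1 := enc_div c₁ o₁ h1
  have e2 := enc_div c₂ o₂ h2
  rw [h] at e1
  have := e1.symm.trans e2
  constructor
  · omega
  · have m1 := enc_mod c₁ o₁ h1
    have m2 := enc_mod c₂ o₂ h2
    rw [h] at m1; omega

/-- The construction direction. -/
lemma construction (n τ σ d : ℕ) (hτ : 1 ≤ τ) (hσ : 1 ≤ σ)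
    (hd : d ∣ Nat.gcd τ σ) (hsn : τ * σ / d ≤ n) :
    ∃ T : ℕ → ℕ → Fin n, IsPSTile n τ σ T ∧ IsSimpleTile n τ σ T ∧
      (tileStates n τ σ T).card = τ * σ / d := by
  have hdτ : d ∣ τ := hd.trans (Nat.gcd_dvd_left _ _)
  have hdσ : d ∣ σ := hd.trans (Nat.gcd_dvd_right _ _)
  have hd0 : 0 < d := by
    rcases Nat.eq_zero_or_pos d with h | h
    · subst h; simp at hdτ; omega
    · exact h
  set m := τ / d with hm_def
  set Δ := σ / d with hΔ_def
  have hm : m * d = τ := Nat.div_mul_cancel hdτ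
  have hΔ : Δ * d = σ := Nat.div_mul_cancel hdσ
  have hm0 : 0 < m := by
    rcases Nat.eq_zero_or_pos m with h | h
    · rw [h] at hm; omega
    · exact h
  have hΔ0 : 0 < Δ := by
    rcases Nat.eq_zero_or_pos Δ with h | h
    · rw [h] at hΔ; omega
    · exact h
  have hms : m * σ = τ * σ / d := by
    have : τ * σ = m * σ * d := by rw [← hm]; ring
    rw [this, Nat.mul_div_cancel _ hd0]
  have hsn' : m * σ ≤ n := by rw [hms]; exact hsn
  have hn0 : 0 < n := by
    have : 0 < m * σ := by positivity
    omega
  have hbound : ∀ i j, (i % m) * σ + ((j + Δ * (i / m)) % σ) < n := by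
    intro i j
    have h1 : i % m < m := Nat.mod_lt _ hm0
    have h2 : (j + Δ * (i / m)) % σ < σ := Nat.mod_lt _ hσ
    have : (i % m) * σ + σ ≤ m * σ := by
      calc (i % m) * σ + σ = (i % m + 1) * σ := by ring
        _ ≤ m * σ := Nat.mul_le_mul_right _ (by omega)
    omega
  set T : ℕ → ℕ → Fin n := fun i j => ⟨(i % m) * σ + ((j + Δ * (i / m)) % σ), hbound i j⟩
    with hT_def
  have hval : ∀ i j, (T i j).val = (i % m) * σ + ((j + Δ * (i / m)) % σ) := fun i j => rfl
  have hoff_lt : ∀ i j, (j + Δ * (i / m)) % σ < σ := fun i j => Nat.mod_lt _ hσ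
  have hvlt : ∀ i j, (T i j).val < m * σ := by
    intro i j
    have h1 : i % m < m := Nat.mod_lt _ hm0
    have h2 := hoff_lt i j
    have : (i % m) * σ + σ ≤ m * σ := by
      calc (i % m) * σ + σ = (i % m + 1) * σ := by ring
        _ ≤ m * σ := Nat.mul_le_mul_right _ (by omega)
    rw [hval]; omega
  -- the successor function
  have nxt : ∀ i j k l, T i j = T k l → T i (j + 1) = T k (l + 1) := by
    intro i j k l h
    have h' := congrArg Fin.val h
    rw [hval, hval] at h'
    obtain ⟨hc, ho⟩ := enc_inj (hoff_lt i j) (hoff_lt k l) h'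
    apply Fin.ext
    rw [hval, hval, hc]
    congr 1
    have e1 : j + 1 + Δ * (i / m) = (j + Δ * (i / m)) + 1 := by ring
    have e2 : l + 1 + Δ * (k / m) = (l + Δ * (k / m)) + 1 := by ring
    rw [e1, e2, Nat.add_mod (j + Δ * (i/m)), Nat.add_mod (l + Δ * (k/m)), ho]
  refine ⟨T, ⟨⟨?_, ?_⟩, ?_, ?_, ?_⟩, ?_, ?_⟩
  · -- temporal periodicity
    intro i j
    apply Fin.ext
    rw [hval, hval]
    have e1 : (i + τ) % m = i % m := by rw [← hm]; exact Nat.add_mul_mod_self_left i m d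
    have e2 : (i + τ) / m = i / m + d := by rw [← hm]; exact Nat.add_mul_div_left i d hm0
    rw [e1, e2]
    congr 1
    have : j + Δ * (i / m + d) = (j + Δ * (i / m)) + σ := by rw [← hΔ]; ring
    rw [this, Nat.add_mod_right]
  · -- spatial periodicity
    intro i j
    apply Fin.ext
    rw [hval, hval]
    congr 1
    have : j + σ + Δ * (i / m) = (j + Δ * (i / m)) + σ := by ring
    rw [this, Nat.add_mod_right]
  · -- uniqueness of assignment
    intro i j k l h _
    have h' := congrArg Fin.val h
    rw [hval, hval] at h'
    obtain ⟨hc, ho⟩ := enc_inj (hoff_lt i j) (hoff_lt k l) h'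
    apply Fin.ext
    rw [hval, hval]
    have e1 : (i + 1) % m = (k + 1) % m := by
      rw [Nat.add_mod i, Nat.add_mod k, hc]
    have e2 : (i + 1) / m = i / m + (if m ∣ i + 1 then 1 else 0) := Nat.succ_div
    have e3 : (k + 1) / m = k / m + (if m ∣ k + 1 then 1 else 0) := Nat.succ_div
    have hiff : (m ∣ i + 1) ↔ (m ∣ k + 1) := by
      rw [Nat.dvd_iff_mod_eq_zero, Nat.dvd_iff_mod_eq_zero, e1]
    have e4 : (if m ∣ i + 1 then 1 else 0) = (if m ∣ k + 1 then 1 else 0) := by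
      by_cases hcase : m ∣ i + 1
      · rw [if_pos hcase, if_pos (hiff.mp hcase)]
      · rw [if_neg hcase, if_neg (fun hh => hcase (hiff.mpr hh))]
    rw [e1, e2, e3, ← e4]
    congr 1
    have r1 : j + 1 + Δ * (i / m + (if m ∣ i + 1 then 1 else 0)) =
        (j + Δ * (i / m)) + (1 + Δ * (if m ∣ i + 1 then 1 else 0)) := by ring
    have r2 : l + 1 + Δ * (k / m + (if m ∣ i + 1 then 1 else 0)) =
        (l + Δ * (k / m)) + (1 + Δ * (if m ∣ i + 1 then 1 else 0)) := by ring
    rw [r1, r2, Nat.add_mod (j + Δ * (i / m)), Nat.add_mod (l + Δ * (k / m)), ho]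
  · -- row minimality
    intro i σ' hσ'0 hp
    have hle : Δ * (i / m) + 1 ≤ σ * (Δ * (i / m) + 1) := Nat.le_mul_of_pos_left _ hσ
    set j0 := σ * (Δ * (i / m) + 1) - Δ * (i / m) with hj0
    have h := congrArg Fin.val (hp j0)
    rw [hval, hval] at h
    have h2 : (j0 + σ' + Δ * (i / m)) % σ = (j0 + Δ * (i / m)) % σ := by omega
    have e0 : j0 + Δ * (i / m) = σ * (Δ * (i / m) + 1) := by omega
    have e1 : j0 + σ' + Δ * (i / m) = σ * (Δ * (i / m) + 1) + σ' := by omega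
    rw [e0, e1, Nat.mul_add_mod, Nat.mul_mod_right] at h2
    exact Nat.le_of_dvd hσ'0 (Nat.dvd_of_mod_eq_zero h2)
  · -- temporal minimality
    intro τ' hτ'0 hp
    have key : ∀ j, (τ' % m) * σ + ((j + Δ * (τ' / m)) % σ) = 0 * σ + (j % σ) := by
      intro j
      have h := congrArg Fin.val (hp 0 j)
      rw [hval, hval] at h
      simpa using h
    have h0 := key 0
    have h0' : τ' % m * σ + Δ * (τ' / m) % σ = 0 := by simpa using h0
    obtain ⟨h1, h2⟩ : τ' % m * σ = 0 ∧ Δ * (τ' / m) % σ = 0 := by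
      constructor <;> omega
    have hmdvd : m ∣ τ' := by
      apply Nat.dvd_of_mod_eq_zero
      rcases Nat.mul_eq_zero.mp h1 with h | h
      · exact h
      · omega
    have hσdvd : σ ∣ Δ * (τ' / m) := Nat.dvd_of_mod_eq_zero h2
    have hddvd : d ∣ τ' / m := by
      have h1 : Δ * d ∣ Δ * (τ' / m) := by rw [hΔ]; exact hσdvd
      exact (mul_dvd_mul_iff_left (by omega : (Δ : ℕ) ≠ 0)).mp h1
    have hq0 : 0 < τ' / m := Nat.div_pos (Nat.le_of_dvd hτ'0 hmdvd) hm0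
    have : d ≤ τ' / m := Nat.le_of_dvd hq0 hddvd
    calc τ = m * d := hm.symm
      _ ≤ m * (τ' / m) := Nat.mul_le_mul_left _ this
      _ = τ' := Nat.mul_div_cancel' hmdvd
  · -- simplicity
    have hnxtb : ∀ a : Fin n, (a.val / σ) * σ + (a.val % σ + 1) % σ < n → True := fun _ _ => trivial
    set nx : Fin n → Fin n :=
      fun a => ⟨((a.val / σ) * σ + (a.val % σ + 1) % σ) % n, Nat.mod_lt _ hn0⟩ with hnx_def
    have key : ∀ i j, T i (j + 1) = nx (T i j) := by
      intro i j
      apply Fin.ext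
      rw [hval]
      show _ = ((((T i j).val / σ) * σ + ((T i j).val % σ + 1) % σ) % n)
      rw [hval, enc_div _ _ (hoff_lt i j), enc_mod _ _ (hoff_lt i j)]
      have hlt : i % m * σ + ((j + Δ * (i / m)) % σ + 1) % σ < n := by
        have h1 : i % m < m := Nat.mod_lt _ hm0
        have h2 : ((j + Δ * (i / m)) % σ + 1) % σ < σ := Nat.mod_lt _ hσ
        have : (i % m) * σ + σ ≤ m * σ := by
          calc (i % m) * σ + σ = (i % m + 1) * σ := by ring
            _ ≤ m * σ := Nat.mul_le_mul_right _ (by omega)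
        omega
      rw [Nat.mod_eq_of_lt hlt]
      congr 1
      have e1 : j + 1 + Δ * (i / m) = (j + Δ * (i / m)) + 1 := by ring
      rw [e1, Nat.add_mod (j + Δ * (i / m)) 1 σ, Nat.add_mod ((j + Δ * (i / m)) % σ) 1 σ,
        Nat.mod_mod_of_dvd _ dvd_rfl]
    have himg : tilePairs n τ σ T = Finset.image (fun a => (a, nx a)) (tileStates n τ σ T) := by
      unfold tilePairs tileStates
      rw [Finset.image_image]
      apply Finset.image_congr
      intro p _
      show (T p.1 p.2, T p.1 (p.2 + 1)) = (T p.1 p.2, nx (T p.1 p.2))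
      rw [key]
    unfold IsSimpleTile
    rw [himg]
    exact Finset.card_image_of_injective _ (fun a b h => congrArg Prod.fst h)
  · -- cardinality
    rw [← hms]
    apply Finset.card_eq_of_bijective
      (f := fun k hk => (⟨k, lt_of_lt_of_le hk hsn'⟩ : Fin n))
    · -- surjective
      intro a ha
      simp only [tileStates, Finset.mem_image, Finset.mem_product, Finset.mem_range] at ha
      obtain ⟨p, ⟨_, _⟩, rfl⟩ := ha
      exact ⟨(T p.1 p.2).val, hvlt p.1 p.2, rfl⟩
    · -- maps into
      intro k hk
      have hkd : k / σ < m := Nat.div_lt_iff_lt_mul hσ |>.mpr hk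
      have hval' : T (k / σ) (k % σ) = (⟨k, lt_of_lt_of_le hk hsn'⟩ : Fin n) := by
        apply Fin.ext
        rw [hval]
        show k / σ % m * σ + (k % σ + Δ * (k / σ / m)) % σ = k
        rw [Nat.mod_eq_of_lt hkd, Nat.div_eq_of_lt hkd, mul_zero, add_zero,
          Nat.mod_mod_of_dvd _ dvd_rfl]
        rw [mul_comm]
        exact Nat.div_add_mod k σ
      rw [← hval']
      simp only [tileStates, Finset.mem_image, Finset.mem_product, Finset.mem_range]
      have hmτ : m ≤ τ := by
        calc m = m * 1 := (mul_one m).symm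
          _ ≤ m * d := Nat.mul_le_mul_left _ hd0
          _ = τ := hm
      exact ⟨(k / σ, k % σ), ⟨lt_of_lt_of_le hkd hmτ, Nat.mod_lt _ hσ⟩, rfl⟩
    · -- injective
      intro k₁ k₂ h₁ h₂ h
      exact congrArg Fin.val h


lemma nat_eq_of_dvd_sub_of_lt {a b c : ℕ} (h : (c:ℤ) ∣ (a:ℤ) - (b:ℤ))
    (ha : a < c) (hb : b < c) : a = b := by
  rcases eq_or_ne ((a:ℤ) - (b:ℤ)) 0 with h0 | h0
  · omega
  · exfalso
    have h6 := Int.le_of_dvd (abs_pos.mpr h0) ((dvd_abs _ _).mpr h)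
    have h7 : |(a:ℤ) - (b:ℤ)| < (c:ℤ) := abs_lt.mpr ⟨by omega, by omega⟩
    omega

/- ### integer extension of a tile -/

def tileExt (n τ σ : ℕ) (T : ℕ → ℕ → Fin n) (i j : ℤ) : Fin n :=
  T (i % (τ : ℤ)).toNat (j % (σ : ℤ)).toNat

section Ext

variable {n τ σ : ℕ} {T : ℕ → ℕ → Fin n}

lemma row_mul_periodic (hper : IsTilePeriodic τ σ T) (i j q : ℕ) :
    T i (j + q * σ) = T i j := by
  induction q with
  | zero => simp
  | succ q ih => rw [show j + (q+1) * σ = (j + q * σ) + σ by ring, hper.2, ih]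

lemma col_mul_periodic (hper : IsTilePeriodic τ σ T) (i j q : ℕ) :
    T (i + q * τ) j = T i j := by
  induction q with
  | zero => simp
  | succ q ih => rw [show i + (q+1) * τ = (i + q * τ) + τ by ring, hper.1, ih]

lemma tile_reduce (hper : IsTilePeriodic τ σ T) (i j : ℕ) :
    T i j = T (i % τ) (j % σ) := by
  conv_lhs => rw [show i = i % τ + (i / τ) * τ by rw [Nat.mod_add_div'],
    show j = j % σ + (j / σ) * σ by rw [Nat.mod_add_div']]
  rw [col_mul_periodic hper, row_mul_periodic hper]

lemma tile_congr (hper : IsTilePeriodic τ σ T) {i j i' j' : ℕ}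
    (h1 : i % τ = i' % τ) (h2 : j % σ = j' % σ) : T i j = T i' j' := by
  rw [tile_reduce hper i j, tile_reduce hper i' j', h1, h2]

lemma tileExt_natCast (hper : IsTilePeriodic τ σ T) (i j : ℕ) :
    tileExt n τ σ T (i : ℤ) (j : ℤ) = T i j := by
  unfold tileExt
  rw [← Int.natCast_mod i τ, ← Int.natCast_mod j σ, Int.toNat_natCast, Int.toNat_natCast]
  exact (tile_reduce hper i j).symm

lemma tileExt_congr {i j i' j' : ℤ} (h1 : i ≡ i' [ZMOD (τ : ℤ)]) (h2 : j ≡ j' [ZMOD (σ : ℤ)]) :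
    tileExt n τ σ T i j = tileExt n τ σ T i' j' := by
  unfold tileExt
  unfold Int.ModEq at h1 h2
  rw [h1, h2]

end Ext

/-- translation-invariance predicate -/
def Hm (n τ σ : ℕ) (T : ℕ → ℕ → Fin n) (a v : ℤ) : Prop :=
  ∀ i j : ℤ, tileExt n τ σ T (i + a) (j + v) = tileExt n τ σ T i j

/-- The extraction direction. -/
lemma extraction (n τ σ : ℕ) (T : ℕ → ℕ → Fin n) (hτ : 1 ≤ τ) (hσ : 1 ≤ σ)
    (hPS : IsPSTile n τ σ T) (hSimp : IsSimpleTile n τ σ T) :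
    ∃ d : ℕ, d ∣ Nat.gcd τ σ ∧ (tileStates n τ σ T).card = τ * σ / d := by
  classical
  obtain ⟨hper, huniq, hRow, hTemp⟩ := hPS
  have hτZ : (0 : ℤ) < (τ : ℤ) := by exact_mod_cast hτ
  have hσZ : (0 : ℤ) < (σ : ℤ) := by exact_mod_cast hσ
  -- membership lemmas
  have hmemS : ∀ i j, T i j ∈ tileStates n τ σ T := by
    intro i j
    refine Finset.mem_image.mpr ⟨(i % τ, j % σ), ?_, (tile_reduce hper i j).symm⟩
    simp [Finset.mem_product, Nat.mod_lt _ hτ, Nat.mod_lt _ hσ]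
  have hmemP : ∀ i j, (T i j, T i (j + 1)) ∈ tilePairs n τ σ T := by
    intro i j
    refine Finset.mem_image.mpr ⟨(i % τ, j % σ), ?_, ?_⟩
    · simp [Finset.mem_product, Nat.mod_lt _ hτ, Nat.mod_lt _ hσ]
    · have e1 : T (i % τ) (j % σ) = T i j := (tile_reduce hper i j).symm
      have e2 : T (i % τ) (j % σ + 1) = T i (j + 1) := by
        apply tile_congr hper
        · exact Nat.mod_mod_of_dvd _ dvd_rfl
        · rw [Nat.add_mod (j % σ) 1 σ, Nat.mod_mod_of_dvd _ dvd_rfl, ← Nat.add_mod]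
      rw [e1, e2]
  -- horizontal determinism from simplicity
  have hstep : ∀ i j k l, T i j = T k l → T i (j + 1) = T k (l + 1) := by
    intro i j k l h
    have hinj := Finset.inj_on_of_surj_on_of_card_le
      (s := tilePairs n τ σ T) (t := tileStates n τ σ T)
      (f := fun p _ => p.1)
      (fun p hp => by
        obtain ⟨q, hq, rfl⟩ := Finset.mem_image.mp hp
        exact hmemS q.1 q.2)
      (fun b hb => by
        obtain ⟨q, hq, rfl⟩ := Finset.mem_image.mp hb
        exact ⟨(T q.1 q.2, T q.1 (q.2 + 1)), hmemP q.1 q.2, rfl⟩)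
      (le_of_eq hSimp)
    have := hinj (hmemP i j) (hmemP k l) h
    exact congrArg Prod.snd this
  have hdiag : ∀ i j k l, T i j = T k l → T (i+1) (j+1) = T (k+1) (l+1) :=
    fun i j k l h => huniq i j k l h (hstep i j k l h)
  have hdiagN : ∀ x i j k l, T i j = T k l → T (i+x) (j+x) = T (k+x) (l+x) := by
    intro x
    induction x with
    | zero => intro i j k l h; simpa using h
    | succ x ih =>
      intro i j k l h
      have e : ∀ a : ℕ, a + (x + 1) = a + x + 1 := fun a => by omega
      rw [e i, e j, e k, e l]
      exact hdiag _ _ _ _ (ih i j k l h)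
  have hstepN : ∀ y i j k l, T i j = T k l → T i (j+y) = T k (l+y) := by
    intro y
    induction y with
    | zero => intro i j k l h; simpa using h
    | succ y ih =>
      intro i j k l h
      have e : ∀ a : ℕ, a + (y + 1) = a + y + 1 := fun a => by omega
      rw [e j, e l]
      exact hstep _ _ _ _ (ih i j k l h)
  have hprop : ∀ i j k l, T i j = T k l → ∀ x y, T (i+x) (j+x+y) = T (k+x) (l+x+y) := by
    intro i j k l h x y
    have h1 := hdiagN x i j k l h
    have h2 := hstepN y _ _ _ _ h1
    exact h2
  -- propagation over ℤ
  have hpropZ : ∀ i j k l : ℤ, tileExt n τ σ T i j = tileExt n τ σ T k l →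
      ∀ x y : ℤ, tileExt n τ σ T (i+x) (j+y) = tileExt n τ σ T (k+x) (l+y) := by
    intro i j k l h x y
    set i₀ := (i % (τ:ℤ)).toNat with hi₀
    set j₀ := (j % (σ:ℤ)).toNat with hj₀
    set k₀ := (k % (τ:ℤ)).toNat with hk₀
    set l₀ := (l % (σ:ℤ)).toNat with hl₀
    set x' := (x % (τ:ℤ)).toNat with hx'
    set r := (y % (σ:ℤ)).toNat with hr
    set y' := r + σ * x' with hy'
    have hxy : x' ≤ y' := by
      have : 1 * x' ≤ σ * x' := Nat.mul_le_mul_right _ hσ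
      omega
    have hbase : T i₀ j₀ = T k₀ l₀ := h
    have hnat : T (i₀ + x') (j₀ + y') = T (k₀ + x') (l₀ + y') := by
      have := hprop i₀ j₀ k₀ l₀ hbase x' (y' - x')
      rw [show j₀ + x' + (y' - x') = j₀ + y' from by omega,
        show l₀ + x' + (y' - x') = l₀ + y' from by omega] at this
      exact this
    have cast_emod : ∀ (z : ℤ) (c : ℕ), 0 < c → ((z % (c:ℤ)).toNat : ℤ) = z % c := by
      intro z c hc
      exact Int.toNat_of_nonneg (Int.emod_nonneg z (by exact_mod_cast hc.ne'))
    have me1 : ∀ (z : ℤ) (c : ℕ) (hc : 0 < c), ((z % (c:ℤ)).toNat : ℤ) ≡ z [ZMOD (c:ℤ)] := by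
      intro z c hc
      rw [cast_emod z c hc]
      exact Int.emod_emod_of_dvd z dvd_rfl ▸ Int.mod_modEq z (c:ℤ)
    have g1 : tileExt n τ σ T (i+x) (j+y) = tileExt n τ σ T ((i₀:ℤ) + (x':ℤ)) ((j₀:ℤ) + (y':ℤ)) := by
      apply tileExt_congr
      · exact (Int.ModEq.add (me1 i τ hτ) (me1 x τ hτ)).symm
      · have h1 : ((y':ℤ)) ≡ (r:ℤ) [ZMOD (σ:ℤ)] := by
          rw [hy']
          push_cast
          exact (Int.ModEq.add_left _ (Int.modEq_zero_iff_dvd.mpr ⟨(x':ℤ), rfl⟩)).trans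
            (by rw [add_zero])
        have h2 : ((j₀:ℤ) + (y':ℤ)) ≡ j + y [ZMOD (σ:ℤ)] :=
          Int.ModEq.add (me1 j σ hσ) (h1.trans (me1 y σ hσ))
        exact h2.symm
    have g2 : tileExt n τ σ T (k+x) (l+y) = tileExt n τ σ T ((k₀:ℤ) + (x':ℤ)) ((l₀:ℤ) + (y':ℤ)) := by
      apply tileExt_congr
      · exact (Int.ModEq.add (me1 k τ hτ) (me1 x τ hτ)).symm
      · have h1 : ((y':ℤ)) ≡ (r:ℤ) [ZMOD (σ:ℤ)] := by
          rw [hy']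
          push_cast
          exact (Int.ModEq.add_left _ (Int.modEq_zero_iff_dvd.mpr ⟨(x':ℤ), rfl⟩)).trans
            (by rw [add_zero])
        have h2 : ((l₀:ℤ) + (y':ℤ)) ≡ l + y [ZMOD (σ:ℤ)] :=
          Int.ModEq.add (me1 l σ hσ) (h1.trans (me1 y σ hσ))
        exact h2.symm
    calc tileExt n τ σ T (i+x) (j+y)
        = tileExt n τ σ T ((i₀:ℤ) + (x':ℤ)) ((j₀:ℤ) + (y':ℤ)) := g1
      _ = T (i₀ + x') (j₀ + y') := by
          rw [← Nat.cast_add, ← Nat.cast_add]; exact tileExt_natCast hper _ _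
      _ = T (k₀ + x') (l₀ + y') := hnat
      _ = tileExt n τ σ T ((k₀:ℤ) + (x':ℤ)) ((l₀:ℤ) + (y':ℤ)) := by
          rw [← Nat.cast_add, ← Nat.cast_add]; exact (tileExt_natCast hper _ _).symm
      _ = tileExt n τ σ T (k+x) (l+y) := g2.symm
  -- the symmetry predicate: basic closure properties
  have Hm_add : ∀ a v b w, Hm n τ σ T a v → Hm n τ σ T b w → Hm n τ σ T (a+b) (v+w) := by
    intro a v b w h1 h2 i j
    rw [show i + (a+b) = (i+b)+a from by ring, show j + (v+w) = (j+w)+v from by ring,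
      h1 (i+b) (j+w), h2 i j]
  have Hm_neg : ∀ a v, Hm n τ σ T a v → Hm n τ σ T (-a) (-v) := by
    intro a v h i j
    have := h (i + -a) (j + -v)
    rw [show i + -a + a = i from by ring, show j + -v + v = j from by ring] at this
    exact this.symm
  have Hm_nsmul : ∀ a v (q : ℕ), Hm n τ σ T a v → Hm n τ σ T (q*a) (q*v) := by
    intro a v q h
    induction q with
    | zero => intro i j; rw [Nat.cast_zero, zero_mul, zero_mul, add_zero, add_zero]
    | succ q ih =>
      have := Hm_add _ _ _ _ ih h
      rw [show ((q:ℤ)*a + a) = ((q:ℕ)+1 : ℤ)*a from by ring,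
        show ((q:ℤ)*v + v) = ((q:ℕ)+1 : ℤ)*v from by ring] at this
      intro i j
      have e : (((q+1 : ℕ)) : ℤ) = ((q:ℕ)+1 : ℤ) := by push_cast; ring
      rw [e]
      exact this i j
  have Hm_zsmul : ∀ a v (q : ℤ), Hm n τ σ T a v → Hm n τ σ T (q*a) (q*v) := by
    intro a v q h
    obtain ⟨p, rfl | rfl⟩ := Int.eq_nat_or_neg q
    · exact Hm_nsmul a v p h
    · have := Hm_neg _ _ (Hm_nsmul a v p h)
      rw [show (-(p:ℤ)*a) = -((p:ℤ)*a) from by ring, show (-(p:ℤ)*v) = -((p:ℤ)*v) from by ring]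
      exact this
  have Hm_iff : ∀ a v, Hm n τ σ T a v ↔
      tileExt n τ σ T a v = tileExt n τ σ T 0 0 := by
    intro a v
    constructor
    · intro h
      have := h 0 0
      rwa [zero_add, zero_add] at this
    · intro h i j
      have := hpropZ a v 0 0 h i j
      rwa [zero_add, zero_add, add_comm a i, add_comm v j] at this
  have Hm_tau : Hm n τ σ T (τ:ℤ) 0 := by
    intro i j
    rw [add_zero]
    apply tileExt_congr _ (Int.ModEq.refl _)
    rw [show (i + (τ:ℤ)) = i + (τ:ℤ)*1 from by ring]
    unfold Int.ModEq
    rw [Int.add_mul_emod_self_left]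
  have Hm_sigma : Hm n τ σ T 0 (σ:ℤ) := by
    intro i j
    rw [add_zero]
    apply tileExt_congr (Int.ModEq.refl _)
    rw [show (j + (σ:ℤ)) = j + (σ:ℤ)*1 from by ring]
    unfold Int.ModEq
    rw [Int.add_mul_emod_self_left]
  -- minimality facts
  have Hm_row : ∀ v, Hm n τ σ T 0 v → (σ:ℤ) ∣ v := by
    intro v h
    set r := (v % (σ:ℤ)).toNat with hr
    have hrv : (r:ℤ) = v % σ := Int.toNat_of_nonneg (Int.emod_nonneg v hσZ.ne')
    have hrlt : r < σ := by
      have := Int.emod_lt_of_pos v hσZ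
      omega
    by_cases hr0 : r = 0
    · apply Int.dvd_of_emod_eq_zero; omega
    · exfalso
      have hple : σ ≤ r := by
        apply hRow 0 r (Nat.pos_of_ne_zero hr0)
        intro j
        calc T 0 (j + r) = tileExt n τ σ T (0:ℤ) ((j:ℤ) + (r:ℤ)) := by
              rw [show ((j:ℤ) + (r:ℤ)) = (((j+r : ℕ)):ℤ) from by push_cast; ring,
                show (0:ℤ) = ((0:ℕ):ℤ) from rfl, tileExt_natCast hper]
          _ = tileExt n τ σ T (0:ℤ) ((j:ℤ) + v) := by
              apply tileExt_congr (Int.ModEq.refl _)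
              apply Int.ModEq.add_left
              rw [hrv]
              exact Int.mod_modEq v (σ:ℤ)
          _ = tileExt n τ σ T (0:ℤ) (j:ℤ) := by
              have := h 0 (j:ℤ)
              rwa [add_zero] at this
          _ = T 0 j := by
              rw [show (0:ℤ) = ((0:ℕ):ℤ) from rfl, tileExt_natCast hper]
      omega
  have Hm_col : ∀ a, Hm n τ σ T a 0 → (τ:ℤ) ∣ a := by
    intro a h
    set r := (a % (τ:ℤ)).toNat with hr
    have hrv : (r:ℤ) = a % τ := Int.toNat_of_nonneg (Int.emod_nonneg a hτZ.ne')
    have hrlt : r < τ := by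
      have := Int.emod_lt_of_pos a hτZ
      omega
    by_cases hr0 : r = 0
    · apply Int.dvd_of_emod_eq_zero; omega
    · exfalso
      have hple : τ ≤ r := by
        apply hTemp r (Nat.pos_of_ne_zero hr0)
        intro i j
        calc T (i + r) j = tileExt n τ σ T ((i:ℤ) + (r:ℤ)) (j:ℤ) := by
              rw [show ((i:ℤ) + (r:ℤ)) = (((i+r : ℕ)):ℤ) from by push_cast; ring,
                tileExt_natCast hper]
          _ = tileExt n τ σ T ((i:ℤ) + a) (j:ℤ) := by
              apply tileExt_congr _ (Int.ModEq.refl _)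
              apply Int.ModEq.add_left
              rw [hrv]
              exact Int.mod_modEq a (τ:ℤ)
          _ = tileExt n τ σ T (i:ℤ) (j:ℤ) := by
              have := h (i:ℤ) (j:ℤ)
              rwa [add_zero] at this
          _ = T i j := tileExt_natCast hper i j
      omega
  -- the minimal positive first coordinate of the symmetry lattice
  have hex : ∃ t : ℕ, 0 < t ∧ ∃ v : ℤ, Hm n τ σ T (t:ℤ) v := ⟨τ, hτ, 0, Hm_tau⟩
  set t₀ := Nat.find hex with ht₀
  obtain ⟨ht₀pos, u, hu⟩ := Nat.find_spec hex
  have ht₀Z : (0:ℤ) < (t₀:ℤ) := by exact_mod_cast ht₀pos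
  have hmin : ∀ t : ℕ, t < t₀ → ¬(0 < t ∧ ∃ v : ℤ, Hm n τ σ T (t:ℤ) v) :=
    fun t ht => Nat.find_min hex ht
  have hdvd_t₀ : ∀ a v : ℤ, Hm n τ σ T a v → (t₀:ℤ) ∣ a := by
    intro a v h
    set q := a / (t₀:ℤ) with hq
    set r := a % (t₀:ℤ) with hrdef
    have hr0 : 0 ≤ r := Int.emod_nonneg a ht₀Z.ne'
    have hrlt : r < t₀ := Int.emod_lt_of_pos a ht₀Z
    have hra : r = a - (t₀:ℤ) * q := by rw [hrdef, hq]; exact Int.emod_def a (t₀:ℤ)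
    have hqmem : Hm n τ σ T (q * (t₀:ℤ)) (q * u) := Hm_zsmul _ _ q hu
    have hrmem : Hm n τ σ T r (v - q * u) := by
      have := Hm_add _ _ _ _ h (Hm_neg _ _ hqmem)
      rw [show a + -(q * (t₀:ℤ)) = a - (t₀:ℤ) * q from by ring,
        show v + -(q*u) = v - q*u from by ring, ← hra] at this
      exact this
    rcases eq_or_ne r 0 with h0 | h0
    · apply Int.dvd_of_emod_eq_zero
      omega
    · exfalso
      apply hmin r.toNat (by omega)
      refine ⟨by omega, v - q*u, ?_⟩
      rw [show ((r.toNat : ℕ) : ℤ) = r from Int.toNat_of_nonneg hr0]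
      exact hrmem
  have ht₀τ : t₀ ∣ τ := by
    have := hdvd_t₀ (τ:ℤ) 0 Hm_tau
    exact_mod_cast this
  have ht₀leτ : t₀ ≤ τ := Nat.le_of_dvd hτ ht₀τ
  -- gcd bookkeeping
  set g := Int.gcd u (σ:ℤ) with hg
  have hgσZ : (g:ℤ) ∣ (σ:ℤ) := Int.gcd_dvd_right _ _
  have hguZ : (g:ℤ) ∣ u := Int.gcd_dvd_left _ _
  have hgσ : g ∣ σ := by exact_mod_cast hgσZ
  have hg0 : 0 < g := by
    rcases Nat.eq_zero_or_pos g with h0 | h0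
    · exfalso
      have := Int.gcd_eq_zero_iff.mp (hg ▸ h0)
      omega
    · exact h0
  obtain ⟨u', hu'⟩ := hguZ
  set D := σ / g with hD
  have hDg : D * g = σ := Nat.div_mul_cancel hgσ
  have hD0 : 0 < D := by
    rcases Nat.eq_zero_or_pos D with h0 | h0
    · rw [h0] at hDg; omega
    · exact h0
  -- τ = t₀ * D
  have hτdvd : τ ∣ t₀ * D := by
    have h1 : Hm n τ σ T ((D:ℤ) * t₀) ((D:ℤ) * u) := Hm_zsmul _ _ (D:ℤ) hu
    have h2 : Hm n τ σ T 0 (-((D:ℤ) * u)) := by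
      apply Hm_neg 0
      have h3 : Hm n τ σ T ((u' : ℤ) * 0) ((u':ℤ) * (σ:ℤ)) := Hm_zsmul _ _ u' Hm_sigma
      rw [mul_zero] at h3
      rw [show ((D:ℤ) * u) = u' * (σ:ℤ) from by
        rw [hu', show ((σ:ℕ):ℤ) = ((D*g : ℕ) : ℤ) from by rw [hDg]]; push_cast; ring]
      exact h3
    have h4 := Hm_add _ _ _ _ h1 h2
    rw [add_zero, add_neg_cancel] at h4
    have h5 : (τ:ℤ) ∣ (D:ℤ) * t₀ := Hm_col _ h4
    have : (τ:ℤ) ∣ ((t₀ * D : ℕ) : ℤ) := by push_cast; rw [mul_comm]; exact h5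
    exact_mod_cast this
  have hdvdτ : t₀ * D ∣ τ := by
    obtain ⟨q, hq⟩ : (t₀:ℤ) ∣ (τ:ℤ) := by exact_mod_cast ht₀τ
    have h1 : Hm n τ σ T (q * t₀) (q * u) := Hm_zsmul _ _ q hu
    have h2 := Hm_add _ _ _ _ Hm_tau (Hm_neg _ _ h1)
    rw [show ((τ:ℤ) + -(q * (t₀:ℤ))) = 0 from by rw [hq]; ring, zero_add] at h2
    have h3 : (σ:ℤ) ∣ -(q * u) := Hm_row _ h2
    have h4 : (σ:ℤ) ∣ q * u := (dvd_neg).mp h3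
    -- cancel g
    have h5 : ((D:ℤ) * g) ∣ (q * u') * g := by
      rw [show ((D:ℤ) * g) = ((D * g : ℕ) : ℤ) from by push_cast; ring, hDg]
      rw [show (q * u') * (g:ℤ) = q * u from by rw [hu']; ring]
      exact h4
    have hgZ0 : (g:ℤ) ≠ 0 := by exact_mod_cast hg0.ne'
    have h6 : (D:ℤ) ∣ q * u' := (mul_dvd_mul_iff_right hgZ0).mp h5
    have hcop : IsCoprime (D:ℤ) u' := by
      rw [Int.isCoprime_iff_gcd_eq_one]
      have := Int.gcd_div_gcd_div_gcd (i := u) (j := (σ:ℤ)) (by rw [← hg]; exact hg0)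
      rw [← hg] at this
      have e1 : u / (g:ℤ) = u' := by rw [hu']; exact Int.mul_ediv_cancel_left _ hgZ0
      have e2 : (σ:ℤ) / (g:ℤ) = (D:ℤ) := by
        rw [show ((σ:ℕ):ℤ) = ((D * g : ℕ):ℤ) from by rw [hDg], Nat.cast_mul]
        exact Int.mul_ediv_cancel _ hgZ0
      rw [e1, e2] at this
      rw [Int.gcd_comm]
      exact this
    have h7 : (D:ℤ) ∣ q := hcop.dvd_of_dvd_mul_right h6
    have h8 : ((t₀ * D : ℕ) : ℤ) ∣ (τ:ℤ) := by
      obtain ⟨w, hw⟩ := h7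
      refine ⟨w, ?_⟩
      rw [hq, hw]
      push_cast
      ring
    exact_mod_cast h8
  have hτeq : τ = t₀ * D := Nat.dvd_antisymm hτdvd hdvdτ
  -- counting: the number of states is t₀ * σ
  have hcount : (tileStates n τ σ T).card = t₀ * σ := by
    apply Finset.card_eq_of_bijective (f := fun k _ => T (k / σ) (k % σ))
    · -- surjective
      intro a ha
      obtain ⟨p, hp, rfl⟩ := Finset.mem_image.mp ha
      set i := p.1 with hi
      set j := p.2 with hj
      set q := i / t₀ with hqdef
      set i' := i % t₀ with hi'def
      have hi'lt : i' < t₀ := Nat.mod_lt _ ht₀pos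
      have h1 : Hm n τ σ T ((q:ℤ) * t₀) ((q:ℤ) * u) := Hm_zsmul _ _ (q:ℤ) hu
      have h2 := h1 (i' : ℤ) ((j:ℤ) - (q:ℤ) * u)
      have ei : (i':ℤ) + (q:ℤ)*(t₀:ℤ) = ((i:ℕ):ℤ) := by
        have : i' + t₀ * q = i := by rw [hi'def, hqdef]; exact Nat.mod_add_div i t₀
        push_cast [← this]
        ring
      rw [ei, show ((j:ℤ) - (q:ℤ)*u + (q:ℤ)*u) = (j:ℤ) from by ring] at h2
      set j' := (((j:ℤ) - (q:ℤ)*u) % (σ:ℤ)).toNat with hj'def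
      have hj'lt : j' < σ := by
        have h5 := Int.emod_lt_of_pos ((j:ℤ) - (q:ℤ)*u) hσZ
        have h6 := Int.emod_nonneg ((j:ℤ) - (q:ℤ)*u) hσZ.ne'
        omega
      have h3 : tileExt n τ σ T (i':ℤ) ((j:ℤ) - (q:ℤ)*u) = T i' j' := by
        show T (((i':ℤ) % (τ:ℤ)).toNat) ((((j:ℤ) - (q:ℤ)*u) % (σ:ℤ)).toNat) = T i' j'
        rw [← hj'def]
        congr 1
        rw [Int.emod_eq_of_lt (by exact_mod_cast Nat.zero_le i')
          (by exact_mod_cast lt_of_lt_of_le hi'lt ht₀leτ), Int.toNat_natCast]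
      have h4 : T i j = T i' j' := by
        rw [← tileExt_natCast hper i j, h2, h3]
      refine ⟨i' * σ + j', ?_, ?_⟩
      · have : (i' + 1) * σ ≤ t₀ * σ := Nat.mul_le_mul_right _ (by omega)
        have e : (i' + 1) * σ = i' * σ + σ := by ring
        omega
      · show T ((i' * σ + j') / σ) ((i' * σ + j') % σ) = T i j
        rw [enc_div _ _ hj'lt, enc_mod _ _ hj'lt]
        exact h4.symm
    · -- maps into the set of states
      intro k hk
      exact hmemS _ _
    · -- injective
      intro k₁ k₂ hk₁ hk₂ heq
      have hi₁ : k₁ / σ < t₀ := (Nat.div_lt_iff_lt_mul hσ).mpr hk₁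
      have hi₂ : k₂ / σ < t₀ := (Nat.div_lt_iff_lt_mul hσ).mpr hk₂
      have hj₁ : k₁ % σ < σ := Nat.mod_lt _ hσ
      have hj₂ : k₂ % σ < σ := Nat.mod_lt _ hσ
      have hE : tileExt n τ σ T ((k₁/σ : ℕ):ℤ) ((k₁%σ : ℕ):ℤ)
          = tileExt n τ σ T ((k₂/σ : ℕ):ℤ) ((k₂%σ : ℕ):ℤ) := by
        rw [tileExt_natCast hper, tileExt_natCast hper]
        exact heq
      have hHm : Hm n τ σ T (((k₂/σ : ℕ):ℤ) - ((k₁/σ : ℕ):ℤ))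
          (((k₂%σ : ℕ):ℤ) - ((k₁%σ : ℕ):ℤ)) := by
        intro p q'
        have h5 := hpropZ _ _ _ _ hE (p - ((k₁/σ : ℕ):ℤ)) (q' - ((k₁%σ : ℕ):ℤ))
        rw [show ((k₁/σ : ℕ):ℤ) + (p - ((k₁/σ : ℕ):ℤ)) = p from by ring,
          show ((k₁%σ : ℕ):ℤ) + (q' - ((k₁%σ : ℕ):ℤ)) = q' from by ring,
          show ((k₂/σ : ℕ):ℤ) + (p - ((k₁/σ : ℕ):ℤ))
            = p + (((k₂/σ : ℕ):ℤ) - ((k₁/σ : ℕ):ℤ)) from by ring,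
          show ((k₂%σ : ℕ):ℤ) + (q' - ((k₁%σ : ℕ):ℤ))
            = q' + (((k₂%σ : ℕ):ℤ) - ((k₁%σ : ℕ):ℤ)) from by ring] at h5
        exact h5.symm
      have hd1 : (t₀:ℤ) ∣ ((k₂/σ : ℕ):ℤ) - ((k₁/σ : ℕ):ℤ) := hdvd_t₀ _ _ hHm
      have hieq : k₂ / σ = k₁ / σ := nat_eq_of_dvd_sub_of_lt hd1 hi₂ hi₁
      have hHm0 : Hm n τ σ T 0 (((k₂%σ : ℕ):ℤ) - ((k₁%σ : ℕ):ℤ)) := by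
        rw [show (0:ℤ) = ((k₂/σ : ℕ):ℤ) - ((k₁/σ : ℕ):ℤ) from by rw [hieq]; ring]
        exact hHm
      have hd2 : (σ:ℤ) ∣ ((k₂%σ : ℕ):ℤ) - ((k₁%σ : ℕ):ℤ) := Hm_row _ hHm0
      have hjeq : k₂ % σ = k₁ % σ := nat_eq_of_dvd_sub_of_lt hd2 hj₂ hj₁
      have e₁ : σ * (k₁ / σ) + k₁ % σ = k₁ := Nat.div_add_mod k₁ σ
      have e₂ : σ * (k₂ / σ) + k₂ % σ = k₂ := Nat.div_add_mod k₂ σ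
      rw [hieq, hjeq] at e₂
      omega
  refine ⟨D, ?_, ?_⟩
  · exact Nat.dvd_gcd ⟨t₀, by rw [hτeq]; ring⟩ ⟨g, hDg.symm⟩
  · rw [hcount, hτeq, show t₀ * D * σ = (t₀ * σ) * D from by ring,
      Nat.mul_div_cancel _ hD0]


theorem simple_tile_state_count_characterization (n τ σ s : ℕ)
    (hτ : 1 ≤ τ) (hσ : 1 ≤ σ) (hs1 : 1 ≤ s) (hsn : s ≤ n) :
    (∃ T : ℕ → ℕ → Fin n, IsPSTile n τ σ T ∧ IsSimpleTile n τ σ T ∧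
        (tileStates n τ σ T).card = s) ↔
      ∃ d : ℕ, d ∣ Nat.gcd τ σ ∧ s = τ * σ / d := by
  constructor
  · rintro ⟨T, hPS, hSimp, hcard⟩
    obtain ⟨d, hd1, hd2⟩ := extraction n τ σ T hτ hσ hPS hSimp
    exact ⟨d, hd1, by rw [← hcard, hd2]⟩
  · rintro ⟨d, hd1, rfl⟩
    exact construction n τ σ d hτ hσ hd1 hsn
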